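/- Let A_0, …, A_{m−1} be simple N×N real matrices and W = { w ∈ ℝᴺ : ∑_{i=1}^N w_i = 0 }. For k ∈ ℕ, let N_k be the number of words (ℓ₁,…,ℓ_k) ∈ {0,…,m−1}^k such that the product A_{ℓ₁}⋯A_{ℓ_k} has at most one nonzero row. Then the limit lim_{k→∞} ( 1 − N_k/m^k )^{1/k} exists and equals ρ_1(A_0|_W, …, A_{m−1}|_W), the L_1-spectral radius of the restrictions of the A_i to W. -/

import Mathlib

open MeasureTheory Metric Filter Set Pointwise

/-- A matrix is simple if every column contains exactly one entry `1` and all other entries `0`. -/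
def IsSimple {I : Type*} (T : Matrix I I ℝ) : Prop :=
  ∀ b, ∃ a, T a b = 1 ∧ ∀ a', a' ≠ a → T a' b = 0

/-- The subspace `W = { w : ∑ i, w i = 0 }`. -/
noncomputable def Wsub (I : Type*) [Fintype I] : Submodule ℝ (I → ℝ) :=
  LinearMap.ker ((∑ i : I, LinearMap.proj i) : (I → ℝ) →ₗ[ℝ] ℝ)

/-- The operator norm of the restriction of `T` to the subspace `U` (for `U` invariant under `T`
this is the norm of `T|_U`). -/
noncomputable def opNormOn {I : Type*} [Fintype I] (U : Submodule ℝ (I → ℝ))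
    (T : Matrix I I ℝ) : ℝ :=
  sSup {c : ℝ | ∃ u ∈ U, ‖u‖ ≤ 1 ∧ c = ‖T.mulVec u‖}

/-- The `L_p`-spectral radius of the family `A` of matrices restricted to the subspace `U`:
`ρ_p = lim_k ( m^{-k} ∑_{words w of length k} ‖(A_{w₁}⋯A_{w_k})|_U‖^p )^{1/(pk)}`. -/
noncomputable def lpRadiusOn {I ι : Type*} [Fintype I] [DecidableEq I] [Fintype ι]
    (U : Submodule ℝ (I → ℝ)) (A : ι → Matrix I I ℝ) (p : ℝ) : ℝ :=
  limUnder Filter.atTop fun k : ℕ =>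
    (((Fintype.card ι : ℝ) ^ k)⁻¹ *
      ∑ w : Fin k → ι, opNormOn U ((List.ofFn fun i => A (w i)).prod) ^ p) ^ (1 / (p * k))


open Filter Set

section Aux
variable {I : Type*} [Fintype I] [DecidableEq I]

/-- Matrix of a function: 1 at `(f b, b)`. -/
noncomputable def mOf (f : I → I) : Matrix I I ℝ :=
  Matrix.of fun a b => if a = f b then (1:ℝ) else 0

lemma mOf_id : mOf (id : I → I) = 1 := by
  ext a b
  simp [mOf, Matrix.one_apply]

lemma mOf_mul (f g : I → I) : mOf f * mOf g = mOf (f ∘ g) := by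
  ext a b
  simp only [Matrix.mul_apply, mOf, Matrix.of_apply, Function.comp]
  rw [Finset.sum_eq_single (g b)]
  · simp
  · intro c _ hc; simp [hc]
  · simp

lemma mOf_foldr (l : List (I → I)) : (l.map mOf).prod = mOf (l.foldr (· ∘ ·) id) := by
  induction l with
  | nil => simp [mOf_id]
  | cons f t ih => simp [ih, mOf_mul]

lemma IsSimple.eq_mOf {T : Matrix I I ℝ} (hT : IsSimple T) : ∃ f, T = mOf f := by
  choose f h1 h2 using hT
  refine ⟨f, ?_⟩
  ext a b
  by_cases h : a = f b
  · simp [mOf, h, h1 b]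
  · simp [mOf, h, h2 b a h]

lemma rows_mOf (f : I → I) : {a | ∃ b, mOf f a b ≠ 0} = Set.range f := by
  ext a
  simp only [mOf, Matrix.of_apply, mem_setOf_eq, Set.mem_range, ne_eq, ite_eq_right_iff,
    one_ne_zero, imp_false, not_not]
  constructor
  · rintro ⟨b, hb⟩; exact ⟨b, hb.symm⟩
  · rintro ⟨b, hb⟩; exact ⟨b, hb.symm⟩

lemma mem_Wsub {u : I → ℝ} : u ∈ Wsub I ↔ ∑ i, u i = 0 := by
  simp [Wsub, LinearMap.mem_ker, LinearMap.sum_apply, LinearMap.proj_apply]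

lemma norm_mulVec_mOf_le (f : I → I) (u : I → ℝ) (hu : ‖u‖ ≤ 1) :
    ‖(mOf f).mulVec u‖ ≤ (Fintype.card I : ℝ) := by
  rcases isEmpty_or_nonempty I with h | h
  · simp [norm_le_zero_iff.mpr]
    have : (mOf f).mulVec u = 0 := Subsingleton.elim _ _
    simp [this]
  refine (pi_norm_le_iff_of_nonneg (by positivity)).2 fun a => ?_
  have : (mOf f).mulVec u a = ∑ b, (if a = f b then 1 else 0) * u b := rfl
  rw [Real.norm_eq_abs, this]
  calc |∑ b, (if a = f b then (1:ℝ) else 0) * u b| ≤ ∑ b, |(if a = f b then (1:ℝ) else 0) * u b| :=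
        Finset.abs_sum_le_sum_abs _ _
    _ ≤ ∑ _b : I, (1:ℝ) := by
        refine Finset.sum_le_sum fun b _ => ?_
        rw [abs_mul]
        by_cases h : a = f b
        · simpa [h] using le_trans (le_trans (norm_le_pi_norm u b) hu) (le_refl 1)
        · simp [h]
    _ = (Fintype.card I : ℝ) := by simp

lemma opNormOn_set_nonempty (U : Submodule ℝ (I → ℝ)) (T : Matrix I I ℝ) :
    (0:ℝ) ∈ {c : ℝ | ∃ u ∈ U, ‖u‖ ≤ 1 ∧ c = ‖T.mulVec u‖} :=
  ⟨0, U.zero_mem, by simp, by simp [Matrix.mulVec_zero]⟩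

lemma opNormOn_bddAbove (U : Submodule ℝ (I → ℝ)) (f : I → I) :
    BddAbove {c : ℝ | ∃ u ∈ U, ‖u‖ ≤ 1 ∧ c = ‖(mOf f).mulVec u‖} := by
  refine ⟨(Fintype.card I : ℝ), ?_⟩
  rintro c ⟨u, _, hu, rfl⟩
  exact norm_mulVec_mOf_le f u hu

lemma opNormOn_nonneg (U : Submodule ℝ (I → ℝ)) (f : I → I) :
    0 ≤ opNormOn U (mOf f) :=
  le_csSup (opNormOn_bddAbove U f) (opNormOn_set_nonempty U (mOf f))

lemma opNormOn_le_card (U : Submodule ℝ (I → ℝ)) (f : I → I) :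
    opNormOn U (mOf f) ≤ (Fintype.card I : ℝ) := by
  refine Real.sSup_le ?_ (by positivity)
  rintro c ⟨u, _, hu, rfl⟩
  exact norm_mulVec_mOf_le f u hu

lemma mulVec_mOf_eq_zero {f : I → I} (hf : (Set.range f).Subsingleton)
    {u : I → ℝ} (hu : u ∈ Wsub I) : (mOf f).mulVec u = 0 := by
  funext a
  have : (mOf f).mulVec u a = ∑ b, (if a = f b then 1 else 0) * u b := rfl
  rw [this]
  by_cases ha : a ∈ Set.range f
  · have : ∀ b : I, a = f b := fun b => (hf ha (Set.mem_range_self b)).symm ▸ rfl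
    have h2 : ∀ b : I, a = f b := fun b => hf ha (Set.mem_range_self b)
    simp only [Pi.zero_apply]
    rw [Finset.sum_congr rfl (fun b _ => by rw [if_pos (h2 b), one_mul])]
    exact mem_Wsub.1 hu
  · simp only [Pi.zero_apply]
    rw [Finset.sum_congr rfl (fun b _ => ?_), Finset.sum_const_zero]
    have : a ≠ f b := fun h => ha ⟨b, h.symm⟩
    simp [this]

lemma opNormOn_eq_zero {f : I → I} (hf : (Set.range f).Subsingleton) :
    opNormOn (Wsub I) (mOf f) = 0 := by
  have : {c : ℝ | ∃ u ∈ Wsub I, ‖u‖ ≤ 1 ∧ c = ‖(mOf f).mulVec u‖} = {0} := by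
    ext c
    constructor
    · rintro ⟨u, hu, _, rfl⟩
      simp [mulVec_mOf_eq_zero hf hu]
    · rintro rfl
      exact opNormOn_set_nonempty _ _
  rw [opNormOn, this, csSup_singleton]

lemma one_le_opNormOn {f : I → I} (hf : ¬ (Set.range f).Subsingleton) :
    1 ≤ opNormOn (Wsub I) (mOf f) := by
  rw [Set.not_subsingleton_iff] at hf
  obtain ⟨x, ⟨b1, rfl⟩, y, ⟨b2, rfl⟩, hxy⟩ := hf
  set u : I → ℝ := Pi.single b1 1 - Pi.single b2 1 with hu
  have hb : b1 ≠ b2 := fun h => hxy (by rw [h])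
  have huW : u ∈ Wsub I := by
    rw [mem_Wsub, hu]
    simp [Finset.sum_sub_distrib, Finset.sum_pi_single']
  have hun : ‖u‖ ≤ 1 := by
    refine (pi_norm_le_iff_of_nonneg zero_le_one).2 fun b => ?_
    rw [hu]
    simp only [Pi.sub_apply]
    rcases eq_or_ne b b1 with rfl | h1 <;> rcases eq_or_ne b b2 with rfl | h2 <;>
      simp_all [Pi.single_apply, Real.norm_eq_abs]
  have hTv : (mOf f).mulVec u (f b1) = 1 := by
    have : (mOf f).mulVec u = (mOf f).mulVec (Pi.single b1 1) - (mOf f).mulVec (Pi.single b2 1) := by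
      rw [hu, Matrix.mulVec_sub]
    rw [this]
    simp [Matrix.mulVec_single, mOf, hxy, hb]
  have h1 : 1 ≤ ‖(mOf f).mulVec u‖ := by
    calc (1:ℝ) = ‖(mOf f).mulVec u (f b1)‖ := by rw [hTv]; simp
      _ ≤ ‖(mOf f).mulVec u‖ := norm_le_pi_norm _ _
  refine le_trans h1 (le_csSup (opNormOn_bddAbove _ f) ⟨u, huW, hun, rfl⟩)

lemma foldr_comp_apply (l : List (I → I)) (c : I → I) :
    l.foldr (· ∘ ·) c = (l.foldr (· ∘ ·) id) ∘ c := by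
  induction l with
  | nil => rfl
  | cons f t ih => simp [List.foldr_cons, ih]; rfl

end Aux

section Aux2
variable {I : Type*} [Fintype I] [DecidableEq I]

/-- Composition of the functions of the matrices along a word. -/
noncomputable def wordFun {m : ℕ} (F : Fin m → I → I) {k : ℕ} (w : Fin k → Fin m) : I → I :=
  (List.ofFn fun i => F (w i)).foldr (· ∘ ·) id

lemma wordFun_append {m k l : ℕ} (F : Fin m → I → I) (w : Fin (k + l) → Fin m) :
    wordFun F w =
      (wordFun F fun i => w (Fin.castAdd l i)) ∘ (wordFun F fun j => w (Fin.natAdd k j)) := by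
  unfold wordFun
  rw [List.ofFn_add, List.foldr_append, foldr_comp_apply]
  rfl

lemma ncard_prod' {α β : Type*} (s : Set α) (t : Set β) :
    (s ×ˢ t).ncard = s.ncard * t.ncard := by
  rw [← Nat.card_coe_set_eq, ← Nat.card_coe_set_eq, ← Nat.card_coe_set_eq,
    Nat.card_congr (Equiv.Set.prod s t), Nat.card_prod]

/-- The number of "bad" words of length `k` (product has non-subsingleton range). -/
noncomputable def badCount {m : ℕ} (F : Fin m → I → I) (k : ℕ) : ℕ :=
  {w : Fin k → Fin m | ¬ (Set.range (wordFun F w)).Subsingleton}.ncard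

lemma badCount_submul {m : ℕ} (F : Fin m → I → I) (k l : ℕ) :
    badCount F (k + l) ≤ badCount F k * badCount F l := by
  rw [badCount, badCount, badCount, ← ncard_prod']
  refine Set.ncard_le_ncard_of_injOn
    (fun w => (fun i => w (Fin.castAdd l i), fun j => w (Fin.natAdd k j))) ?_ ?_ (Set.toFinite _)
  · intro w hw
    simp only [Set.mem_setOf_eq] at hw
    rw [wordFun_append] at hw
    constructor
    · simp only [Set.mem_setOf_eq]
      intro hsub
      exact hw (hsub.anti (by rw [Set.range_comp]; exact Set.image_subset_range _ _))
    · simp only [Set.mem_setOf_eq]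
      intro hsub
      exact hw (by rw [Set.range_comp]; exact hsub.image _)
  · intro w1 _ w2 _ h
    simp only [Prod.mk.injEq] at h
    funext i
    refine Fin.addCases (fun i => ?_) (fun j => ?_) i
    · exact congrFun h.1 i
    · exact congrFun h.2 j

end Aux2

/-- For simple matrices `A_0, …, A_{m-1}`, the limit `lim_k (1 - N_k/m^k)^{1/k}` exists and equals
`ρ_1(A|_W)`, where `N_k` is the number of words whose product has at most one nonzero row. -/
theorem tendsto_one_sub_ratio_rpow {N m : ℕ} (hm : 0 < m)
    (A : Fin m → Matrix (Fin N) (Fin N) ℝ) (hA : ∀ i, IsSimple (A i)) :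
    Filter.Tendsto (fun k : ℕ =>
        ((1 : ℝ) - (Set.ncard {w : Fin k → Fin m |
            {a : Fin N | ∃ b : Fin N, ((List.ofFn fun i => A (w i)).prod) a b ≠ 0}.Subsingleton}
          : ℝ) / (m : ℝ) ^ k) ^ ((1 : ℝ) / k))
      Filter.atTop (nhds (lpRadiusOn (Wsub (Fin N)) A 1)) := by
  classical
  choose F hF using fun i => (hA i).eq_mOf
  have hprod : ∀ {k : ℕ} (w : Fin k → Fin m),
      (List.ofFn fun i => A (w i)).prod = mOf (wordFun F w) := by
    intro k w
    have h1 : (List.ofFn fun i => A (w i)) = (List.ofFn fun i => F (w i)).map mOf := by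
      rw [List.map_ofFn]
      exact congrArg _ (funext fun i => hF (w i))
    rw [h1, mOf_foldr]
    rfl
  have hsets : ∀ {k : ℕ} (w : Fin k → Fin m),
      {a : Fin N | ∃ b : Fin N, ((List.ofFn fun i => A (w i)).prod) a b ≠ 0}
        = Set.range (wordFun F w) := by
    intro k w
    rw [hprod w]
    exact rows_mOf _
  set G : ℕ → ℕ := fun k => Set.ncard {w : Fin k → Fin m |
      {a : Fin N | ∃ b : Fin N, ((List.ofFn fun i => A (w i)).prod) a b ≠ 0}.Subsingleton}
    with hGdef
  set S : ℕ → ℝ := fun k =>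
      ∑ w : Fin k → Fin m, opNormOn (Wsub (Fin N)) ((List.ofFn fun i => A (w i)).prod)
    with hSdef
  have hGcount : ∀ k : ℕ, G k + badCount F k = m ^ k := by
    intro k
    have h1 : {w : Fin k → Fin m |
        {a : Fin N | ∃ b : Fin N, ((List.ofFn fun i => A (w i)).prod) a b ≠ 0}.Subsingleton}
        = {w : Fin k → Fin m | (Set.range (wordFun F w)).Subsingleton} := by
      ext w
      rw [Set.mem_setOf_eq, Set.mem_setOf_eq, hsets w]
    have h2 : {w : Fin k → Fin m | ¬ (Set.range (wordFun F w)).Subsingleton}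
        = {w : Fin k → Fin m | (Set.range (wordFun F w)).Subsingleton}ᶜ := by
      ext w; simp
    rw [hGdef]
    simp only []
    rw [h1, badCount, h2, Set.ncard_add_ncard_compl, Nat.card_eq_fintype_card,
      Fintype.card_fun, Fintype.card_fin, Fintype.card_fin]
  have hratio : ∀ k : ℕ, (1 : ℝ) - (G k : ℝ) / (m : ℝ) ^ k
      = (badCount F k : ℝ) / (m : ℝ) ^ k := by
    intro k
    have hmk : ((m : ℝ) ^ k) ≠ 0 := by positivity
    have h1 : (G k : ℝ) + (badCount F k : ℝ) = (m : ℝ) ^ k := by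
      exact_mod_cast congrArg (Nat.cast : ℕ → ℝ) (hGcount k)
    field_simp
    linarith
  have hbS : ∀ k : ℕ, (badCount F k : ℝ) ≤ S k ∧ S k ≤ (N : ℝ) * (badCount F k : ℝ) := by
    intro k
    set B : Finset (Fin k → Fin m) :=
      Finset.univ.filter fun w => ¬ (Set.range (wordFun F w)).Subsingleton with hB
    have hcard : badCount F k = B.card := by
      rw [badCount, show {w : Fin k → Fin m | ¬ (Set.range (wordFun F w)).Subsingleton} = ↑B by
        ext w; simp [hB], Set.ncard_coe_finset]
    have hSkB : S k = ∑ w ∈ B, opNormOn (Wsub (Fin N)) ((List.ofFn fun i => A (w i)).prod) := by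
      rw [hSdef]
      simp only []
      rw [eq_comm]
      apply Finset.sum_subset (Finset.subset_univ B)
      intro w _ hw
      rw [hprod w]
      apply opNormOn_eq_zero
      by_contra hc
      exact hw (Finset.mem_filter.2 ⟨Finset.mem_univ _, hc⟩)
    constructor
    · rw [hcard, hSkB]
      calc (B.card : ℝ) = ∑ _w ∈ B, (1 : ℝ) := by simp
        _ ≤ _ := Finset.sum_le_sum fun w hw => by
            rw [hprod w]
            exact one_le_opNormOn (Finset.mem_filter.1 hw).2
    · rw [hcard, hSkB]
      calc ∑ w ∈ B, opNormOn (Wsub (Fin N)) ((List.ofFn fun i => A (w i)).prod)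
          ≤ ∑ _w ∈ B, (N : ℝ) := Finset.sum_le_sum fun w hw => by
            rw [hprod w]
            simpa [Fintype.card_fin] using opNormOn_le_card (Wsub (Fin N)) (wordFun F w)
        _ = (N : ℝ) * B.card := by simp [mul_comm]
  have hlp : lpRadiusOn (Wsub (Fin N)) A 1
      = limUnder atTop (fun k : ℕ => (((m : ℝ) ^ k)⁻¹ * S k) ^ ((1 : ℝ) / (k : ℝ))) := by
    rw [lpRadiusOn]
    congr 1
    funext k
    simp [Real.rpow_one, Fintype.card_fin, one_mul, hSdef]
  by_cases hzero : ∃ k0, badCount F k0 = 0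
  · obtain ⟨k0, hk0⟩ := hzero
    have hallz : ∀ n, k0 ≤ n → badCount F n = 0 := by
      intro n hn
      have h1 := badCount_submul F k0 (n - k0)
      rw [Nat.add_sub_cancel' hn] at h1
      simpa [hk0] using h1
    have hS0 : ∀ n, k0 ≤ n → S n = 0 := by
      intro n hn
      have h1 := (hbS n).1
      have h2 := (hbS n).2
      rw [hallz n hn] at h1 h2
      simp only [Nat.cast_zero, mul_zero] at h1 h2
      linarith
    have hlim0 : Tendsto (fun k : ℕ => (((m : ℝ) ^ k)⁻¹ * S k) ^ ((1 : ℝ) / (k : ℝ)))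
        atTop (nhds 0) := by
      apply Tendsto.congr' _ (tendsto_const_nhds (x := (0:ℝ)))
      filter_upwards [eventually_ge_atTop (max k0 1)] with k hk
      have hk1 : 1 ≤ k := le_trans (le_max_right _ _) hk
      have hkinv : (1 : ℝ) / (k : ℝ) ≠ 0 := by
        have : (0:ℝ) < (k : ℝ) := by exact_mod_cast hk1
        positivity
      rw [hS0 k (le_trans (le_max_left _ _) hk), mul_zero, Real.zero_rpow hkinv]
    rw [hlp, hlim0.limUnder_eq]
    apply Tendsto.congr' _ (tendsto_const_nhds (x := (0:ℝ)))
    filter_upwards [eventually_ge_atTop (max k0 1)] with k hk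
    have hk1 : 1 ≤ k := le_trans (le_max_right _ _) hk
    have hkinv : (1 : ℝ) / (k : ℝ) ≠ 0 := by
      have : (0:ℝ) < (k : ℝ) := by exact_mod_cast hk1
      positivity
    rw [hratio k, hallz k (le_trans (le_max_left _ _) hk), Nat.cast_zero, zero_div,
      Real.zero_rpow hkinv]
  · push_neg at hzero
    have hc1 : ∀ k, (1 : ℝ) ≤ (badCount F k : ℝ) := fun k => by
      exact_mod_cast Nat.one_le_iff_ne_zero.2 (hzero k)
    have hcpos : ∀ k, (0 : ℝ) < (badCount F k : ℝ) := fun k => lt_of_lt_of_le one_pos (hc1 k)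
    set u : ℕ → ℝ := fun k => Real.log (badCount F k) with hudef
    have hu0 : ∀ k, 0 ≤ u k := fun k => Real.log_nonneg (hc1 k)
    have hsub : Subadditive u := by
      intro k l
      have h1 : (badCount F (k + l) : ℝ) ≤ (badCount F k : ℝ) * (badCount F l : ℝ) := by
        exact_mod_cast badCount_submul F k l
      calc u (k + l) ≤ Real.log ((badCount F k : ℝ) * (badCount F l : ℝ)) := by
            rw [hudef]
            exact (Real.log_le_log_iff (hcpos _) (mul_pos (hcpos k) (hcpos l))).2 h1
        _ = u k + u l := Real.log_mul (ne_of_gt (hcpos k)) (ne_of_gt (hcpos l))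
    have hbdd : BddBelow (Set.range fun n : ℕ => u n / n) := by
      refine ⟨0, ?_⟩
      rintro x ⟨n, rfl⟩
      exact div_nonneg (hu0 n) (Nat.cast_nonneg n)
    have hL := hsub.tendsto_lim hbdd
    have hx : Tendsto (fun k : ℕ => u k / k - Real.log m) atTop
        (nhds (hsub.lim - Real.log m)) := hL.sub_const _
    have hSpos : ∀ k, 0 < S k := fun k => lt_of_lt_of_le (hcpos k) (hbS k).1
    have ht : Tendsto (fun k : ℕ =>
        ((1 : ℝ) - (G k : ℝ) / (m : ℝ) ^ k) ^ ((1 : ℝ) / (k : ℝ)))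
        atTop (nhds (Real.exp (hsub.lim - Real.log m))) := by
      refine Tendsto.congr' ?_ ((Real.continuous_exp.tendsto _).comp hx)
      filter_upwards [eventually_ge_atTop 1] with k hk
      have hkR : (0 : ℝ) < (k : ℝ) := by exact_mod_cast hk
      rw [hratio k]
      have hckpos : 0 < (badCount F k : ℝ) / (m : ℝ) ^ k := div_pos (hcpos k) (by positivity)
      simp only [Function.comp_apply]
      rw [Real.rpow_def_of_pos hckpos, Real.log_div (ne_of_gt (hcpos k)) (by positivity),
        Real.log_pow]
      rw [Real.exp_eq_exp]
      field_simp
      try ring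
    have hy : Tendsto (fun k : ℕ => (Real.log (S k) - k * Real.log m) / k) atTop
        (nhds (hsub.lim - Real.log m)) := by
      have hupper : Tendsto (fun k : ℕ => u k / k - Real.log m + Real.log N / k) atTop
          (nhds (hsub.lim - Real.log m)) := by
        have := hx.add (tendsto_const_div_atTop_nhds_zero_nat (Real.log N))
        simpa using this
      refine tendsto_of_tendsto_of_tendsto_of_le_of_le' hx hupper ?_ ?_
      · filter_upwards [eventually_ge_atTop 1] with k hk
        have hkR : (0 : ℝ) < (k : ℝ) := by exact_mod_cast hk
        have h1 : u k ≤ Real.log (S k) :=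
          (Real.log_le_log_iff (hcpos k) (hSpos k)).2 (hbS k).1
        rw [sub_div, mul_comm, mul_div_assoc, div_self (ne_of_gt hkR), mul_one]
        exact sub_le_sub_right (div_le_div_of_nonneg_right h1 hkR.le) _
      · filter_upwards [eventually_ge_atTop 1] with k hk
        have hkR : (0 : ℝ) < (k : ℝ) := by exact_mod_cast hk
        have hNpos : (0 : ℝ) < (N : ℝ) := by
          by_contra h
          push_neg at h
          have : (N : ℝ) * (badCount F k : ℝ) ≤ 0 :=
            mul_nonpos_of_nonpos_of_nonneg h (le_of_lt (hcpos k))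
          linarith [lt_of_lt_of_le (hSpos k) (hbS k).2]
        have h1 : Real.log (S k) ≤ Real.log N + u k := by
          rw [← Real.log_mul (ne_of_gt hNpos) (ne_of_gt (hcpos k))]
          exact (Real.log_le_log_iff (hSpos k) (mul_pos hNpos (hcpos k))).2 (hbS k).2
        rw [sub_div, mul_comm, mul_div_assoc, div_self (ne_of_gt hkR), mul_one]
        have := div_le_div_of_nonneg_right h1 hkR.le
        rw [add_div] at this
        linarith
    have hs : Tendsto (fun k : ℕ => (((m : ℝ) ^ k)⁻¹ * S k) ^ ((1 : ℝ) / (k : ℝ))) atTop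
        (nhds (Real.exp (hsub.lim - Real.log m))) := by
      refine Tendsto.congr' ?_ ((Real.continuous_exp.tendsto _).comp hy)
      filter_upwards [eventually_ge_atTop 1] with k hk
      have hkR : (0 : ℝ) < (k : ℝ) := by exact_mod_cast hk
      have hmpos : (0:ℝ) < (m:ℝ) := by exact_mod_cast hm
      have hpos2 : 0 < ((m : ℝ) ^ k)⁻¹ * S k :=
        mul_pos (inv_pos.2 (pow_pos hmpos k)) (hSpos k)
      simp only [Function.comp_apply]
      rw [Real.rpow_def_of_pos hpos2,
        Real.log_mul (ne_of_gt (inv_pos.2 (pow_pos hmpos k))) (ne_of_gt (hSpos k)),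
        Real.log_inv, Real.log_pow]
      rw [Real.exp_eq_exp]
      field_simp
      try ring
    rw [hlp, hs.limUnder_eq]
    exact ht
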